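/- Let constants τ, ζ, δ satisfy 0 < τ ≪ ζ ≪ δ (quantified from largest to smallest: for every δ there is a threshold for ζ, and for every ζ a threshold for τ). Let n be a positive integer, let H be a graph on at most n vertices, let H' be a spanning subgraph of H obtained by removing at most τ·n² edges, and let W ⊆ V(H) be a set of at most τ·n vertices. If H has no ζ-sparse cut and the minimum degree of H' is at least δ·n, then the graph H' − W (the subgraph of H' induced on V(H) \ W) has no 0.99ζ-sparse cut and its minimum degree is at least 0.99δ·n. -/

import Mathlib

open SimpleGraph

/-- The number of edges of `G` with one end in `X` and one end in `Y`
(intended for disjoint `X`, `Y`). -/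
noncomputable def ebtw {V : Type*} (G : SimpleGraph V) (X Y : Set V) : ℕ :=
  {e : Sym2 V | e ∈ G.edgeSet ∧ ∃ x ∈ X, ∃ y ∈ Y, e = s(x, y)}.ncard

/-- `A` has an `α`-sparse cut in `G`. -/
def HasSparseCut {V : Type*} (G : SimpleGraph V) (A : Set V) (α : ℝ) : Prop :=
  ∃ X Y : Set V, X ∪ Y = A ∧ Disjoint X Y ∧ X.Nonempty ∧ Y.Nonempty ∧
    (ebtw G X Y : ℝ) ≤ α * X.ncard * Y.ncard

section Aux

variable {V : Type*} [Fintype V]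

lemma ebtw_eq (G : SimpleGraph V) {X Y : Set V} (hd : Disjoint X Y) :
    ebtw G X Y = {p : V × V | p.1 ∈ X ∧ p.2 ∈ Y ∧ G.Adj p.1 p.2}.ncard := by
  have himg : {e : Sym2 V | e ∈ G.edgeSet ∧ ∃ x ∈ X, ∃ y ∈ Y, e = s(x, y)}
      = (fun p : V × V => s(p.1, p.2)) '' {p : V × V | p.1 ∈ X ∧ p.2 ∈ Y ∧ G.Adj p.1 p.2} := by
    ext e
    constructor
    · rintro ⟨he, x, hx, y, hy, rfl⟩
      exact ⟨(x, y), ⟨hx, hy, (G.mem_edgeSet).mp he⟩, rfl⟩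
    · rintro ⟨⟨x, y⟩, ⟨hx, hy, ha⟩, rfl⟩
      exact ⟨(G.mem_edgeSet).mpr ha, x, hx, y, hy, rfl⟩
  rw [ebtw, himg, Set.ncard_image_of_injOn]
  rintro ⟨x, y⟩ ⟨hx, hy, _⟩ ⟨x', y'⟩ ⟨hx', hy', _⟩ h
  simp only [Sym2.eq, Sym2.rel_iff', Prod.mk.injEq, Prod.swap_prod_mk] at h
  rcases h with ⟨rfl, rfl⟩ | ⟨rfl, rfl⟩
  · rfl
  · exact absurd hy' (Set.disjoint_left.mp hd hx)

lemma ebtw_comm (G : SimpleGraph V) (X Y : Set V) : ebtw G X Y = ebtw G Y X := by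
  unfold ebtw
  congr 1
  ext e
  simp only [Set.mem_setOf_eq]
  constructor <;> rintro ⟨he, x, hx, y, hy, rfl⟩ <;>
    exact ⟨he, y, hy, x, hx, Sym2.eq_swap.symm⟩

lemma ebtw_le_mul (G : SimpleGraph V) {X Y : Set V} (hd : Disjoint X Y) :
    ebtw G X Y ≤ X.ncard * Y.ncard := by
  classical
  rw [ebtw_eq G hd]
  calc {p : V × V | p.1 ∈ X ∧ p.2 ∈ Y ∧ G.Adj p.1 p.2}.ncard
      ≤ (X ×ˢ Y).ncard :=
        Set.ncard_le_ncard (fun p hp => ⟨hp.1, hp.2.1⟩) (Set.toFinite _)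
    _ = X.ncard * Y.ncard := by
        rw [Set.ncard_eq_toFinset_card' (X ×ˢ Y), Set.toFinset_prod,
          Finset.card_product, ← Set.ncard_eq_toFinset_card', ← Set.ncard_eq_toFinset_card']

lemma ebtw_le_add {H H' : SimpleGraph V} (h : H' ≤ H) (X Y : Set V) :
    ebtw H X Y ≤ ebtw H' X Y + (H.edgeSet \ H'.edgeSet).ncard := by
  refine le_trans (Set.ncard_le_ncard ?_ (Set.toFinite _)) (Set.ncard_union_le _ _)
  rintro e ⟨he, hrep⟩
  by_cases h' : e ∈ H'.edgeSet
  · exact Or.inl ⟨h', hrep⟩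
  · exact Or.inr ⟨he, h'⟩

lemma ebtw_union_le (G : SimpleGraph V) (X W Y : Set V) :
    ebtw G (X ∪ W) Y ≤ ebtw G X Y + ebtw G W Y := by
  refine le_trans (Set.ncard_le_ncard ?_ (Set.toFinite _)) (Set.ncard_union_le _ _)
  rintro e ⟨he, x, hx, y, hy, rfl⟩
  rcases hx with hx | hx
  · exact Or.inl ⟨he, x, hx, y, hy, rfl⟩
  · exact Or.inr ⟨he, x, hx, y, hy, rfl⟩

lemma le_ebtw (G : SimpleGraph V) {X Y : Set V} (hd : Disjoint X Y) (m : ℝ)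
    (hm : ∀ x ∈ X, m ≤ ({u | u ∈ Y ∧ G.Adj x u}.ncard : ℝ)) :
    (X.ncard : ℝ) * m ≤ (ebtw G X Y : ℝ) := by
  classical
  rw [ebtw_eq G hd]
  set S : Set (V × V) := {p : V × V | p.1 ∈ X ∧ p.2 ∈ Y ∧ G.Adj p.1 p.2} with hSdef
  have hcard : S.toFinset.card
      = ∑ x ∈ X.toFinset, (S.toFinset.filter (fun p => p.1 = x)).card := by
    refine Finset.card_eq_sum_card_fiberwise (fun p hp => ?_)
    rw [Finset.mem_coe, Set.mem_toFinset] at hp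
    rw [Finset.mem_coe, Set.mem_toFinset]
    exact hp.1
  have key : ∀ x ∈ X.toFinset, m ≤ ((S.toFinset.filter (fun p => p.1 = x)).card : ℝ) := by
    intro x hx
    rw [Set.mem_toFinset] at hx
    refine le_trans (hm x hx) ?_
    have : {u | u ∈ Y ∧ G.Adj x u}.ncard ≤ (S.toFinset.filter (fun p => p.1 = x)).card := by
      rw [Set.ncard_eq_toFinset_card']
      refine Finset.card_le_card_of_injOn (fun u => (x, u)) (fun u hu => ?_) ?_
      · rw [Finset.mem_coe, Set.mem_toFinset] at hu
        simp only [Finset.mem_coe, Finset.mem_filter, Set.mem_toFinset]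
        exact ⟨⟨hx, hu.1, hu.2⟩, trivial⟩
      · intro a _ b _ hab
        exact (Prod.mk.injEq _ _ _ _ ▸ hab).2
    exact_mod_cast this
  have hsum : (X.ncard : ℝ) * m ≤ ∑ x ∈ X.toFinset, ((S.toFinset.filter (fun p => p.1 = x)).card : ℝ) := by
    have := Finset.sum_le_sum key
    rw [Finset.sum_const, nsmul_eq_mul] at this
    rwa [Set.ncard_eq_toFinset_card', mul_comm] at *
  calc (X.ncard : ℝ) * m ≤ _ := hsum
    _ = (S.toFinset.card : ℝ) := by rw [hcard]; push_cast; ring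
    _ = (S.ncard : ℝ) := by rw [Set.ncard_eq_toFinset_card']

end Aux

/-- **Robustness under removal of few vertices and edges** (Observation 3.3(i)):
if `H` has no `ζ`-sparse cut, `H'` is obtained from `H` by deleting at most `τ n²` edges
and has minimum degree at least `δ n`, and `W` is a set of at most `τ n` vertices, then
`H' − W` has no `0.99 ζ`-sparse cut and has minimum degree at least `0.99 δ n`. -/
theorem remove_small_sparse_cut_min_degree :
    ∀ δ : ℝ, 0 < δ →
    ∃ ζ₀ : ℝ, 0 < ζ₀ ∧ ∀ ζ : ℝ, 0 < ζ → ζ ≤ ζ₀ →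
    ∃ τ₀ : ℝ, 0 < τ₀ ∧ ∀ τ : ℝ, 0 < τ → τ ≤ τ₀ →
    ∀ n : ℕ, 0 < n →
    ∀ (V : Type) [Fintype V] (H H' : SimpleGraph V),
      Fintype.card V ≤ n →
      H' ≤ H → ((H.edgeSet \ H'.edgeSet).ncard : ℝ) ≤ τ * n ^ 2 →
    ∀ W : Set V, (W.ncard : ℝ) ≤ τ * n →
      ¬ HasSparseCut H Set.univ ζ →
      (∀ v : V, δ * n ≤ ({u | H'.Adj v u}.ncard : ℝ)) →
      ¬ HasSparseCut H' Wᶜ (0.99 * ζ) ∧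
        ∀ v ∈ Wᶜ, 0.99 * δ * n ≤ ({u | u ∈ Wᶜ ∧ H'.Adj v u}.ncard : ℝ) := by
  intro δ hδ
  refine ⟨δ / 4, by positivity, ?_⟩
  intro ζ hζ hζ₀
  refine ⟨min (0.01 * δ) (0.002 * ζ * δ ^ 2), by positivity, ?_⟩
  intro τ hτ hτ₀ n hn V _ H H' hcardV hle hdiff W hW hnsc hdeg
  have hτδ : τ ≤ 0.01 * δ := le_trans hτ₀ (min_le_left _ _)
  have hτζ : τ ≤ 0.002 * ζ * δ ^ 2 := le_trans hτ₀ (min_le_right _ _)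
  have hn0 : (0:ℝ) < n := by exact_mod_cast hn
  have hτn : τ * n ≤ 0.01 * δ * n := mul_le_mul_of_nonneg_right hτδ hn0.le
  have hcardn : ∀ A : Set V, (A.ncard : ℝ) ≤ n := by
    intro A
    have h1 : A.ncard ≤ Fintype.card V := by
      simpa [Set.ncard_univ, Nat.card_eq_fintype_card] using
        Set.ncard_le_ncard (Set.subset_univ A) (Set.toFinite _)
    exact_mod_cast le_trans h1 hcardV
  constructor
  · rintro ⟨X, Y, hXY, hdisj, hXne, hYne, hcut⟩
    have hXsub : X ⊆ Wᶜ := hXY ▸ Set.subset_union_left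
    have hYsub : Y ⊆ Wᶜ := hXY ▸ Set.subset_union_right
    have hXW : Disjoint X W := Set.disjoint_left.mpr fun a ha => hXsub ha
    have hYW : Disjoint Y W := Set.disjoint_left.mpr fun a ha => hYsub ha
    have hx1 : (1:ℝ) ≤ X.ncard := by
      exact_mod_cast (Set.ncard_pos (Set.toFinite _)).mpr hXne
    have hy1 : (1:ℝ) ≤ Y.ncard := by
      exact_mod_cast (Set.ncard_pos (Set.toFinite _)).mpr hYne
    -- fiber degree bound
    have hfib : ∀ A B : Set V, A ∪ B = Wᶜ → ∀ x ∈ A,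
        δ * n - τ * n - (A.ncard : ℝ) ≤ ({u | u ∈ B ∧ H'.Adj x u}.ncard : ℝ) := by
      intro A B hAB x hx
      have hsub : {u | H'.Adj x u} ⊆ {u | u ∈ B ∧ H'.Adj x u} ∪ A ∪ W := by
        intro u hu
        by_cases hwu : u ∈ W
        · exact Or.inr hwu
        · have huAB : u ∈ A ∪ B := hAB ▸ (hwu : u ∈ Wᶜ)
          rcases huAB with h | h
          · exact Or.inl (Or.inr h)
          · exact Or.inl (Or.inl ⟨h, hu⟩)
      have hN : {u | H'.Adj x u}.ncard
          ≤ {u | u ∈ B ∧ H'.Adj x u}.ncard + A.ncard + W.ncard :=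
        le_trans (Set.ncard_le_ncard hsub (Set.toFinite _))
          (le_trans (Set.ncard_union_le _ _)
            (Nat.add_le_add_right (Set.ncard_union_le _ _) _))
      have hNc : ({u | H'.Adj x u}.ncard : ℝ)
          ≤ ({u | u ∈ B ∧ H'.Adj x u}.ncard : ℝ) + A.ncard + W.ncard := by
        exact_mod_cast hN
      have := hdeg x
      linarith
    have hEX : (X.ncard : ℝ) * (δ * n - τ * n - X.ncard) ≤ (ebtw H' X Y : ℝ) :=
      le_ebtw H' hdisj _ (hfib X Y hXY)
    have hEY : (Y.ncard : ℝ) * (δ * n - τ * n - Y.ncard) ≤ (ebtw H' X Y : ℝ) := by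
      have := le_ebtw H' hdisj.symm _ (hfib Y X (by rw [Set.union_comm]; exact hXY))
      rwa [ebtw_comm H' Y X] at this
    have hXn := hcardn X
    have hYn := hcardn Y
    -- size lower bounds
    have hsize : ∀ A B : Set V, (1:ℝ) ≤ A.ncard → (B.ncard : ℝ) ≤ n →
        (A.ncard : ℝ) * (δ * n - τ * n - A.ncard) ≤ 0.99 * ζ * A.ncard * B.ncard →
        0.7 * δ * n ≤ (A.ncard : ℝ) := by
      intro A B hA hB h
      have hA0 : (0:ℝ) < A.ncard := by linarith
      have h2 : (A.ncard : ℝ) * (δ * n - τ * n - A.ncard)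
          ≤ A.ncard * (0.99 * ζ * B.ncard) := by
        calc (A.ncard : ℝ) * (δ * n - τ * n - A.ncard)
            ≤ 0.99 * ζ * A.ncard * B.ncard := h
          _ = A.ncard * (0.99 * ζ * B.ncard) := by ring
      have h3 := le_of_mul_le_mul_left h2 hA0
      have h4 : 0.99 * ζ * (B.ncard : ℝ) ≤ 0.99 * ζ * n :=
        mul_le_mul_of_nonneg_left hB (by positivity)
      have h6 : 0.99 * ζ * (n:ℝ) ≤ 0.99 * (δ / 4) * n := by
        have := mul_le_mul_of_nonneg_right hζ₀ hn0.le
        nlinarith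
      linarith
    have hXlb : 0.7 * δ * n ≤ (X.ncard : ℝ) :=
      hsize X Y hx1 hYn (hEX.trans hcut)
    have hYlb : 0.7 * δ * n ≤ (Y.ncard : ℝ) := by
      refine hsize Y X hy1 hXn (hEY.trans ?_)
      calc (ebtw H' X Y : ℝ) ≤ 0.99 * ζ * X.ncard * Y.ncard := hcut
        _ = 0.99 * ζ * Y.ncard * X.ncard := by ring
    -- cut of H on univ
    have hnot : ¬ ((ebtw H (X ∪ W) Y : ℝ) ≤ ζ * (X ∪ W).ncard * Y.ncard) := by
      intro hle'
      exact hnsc ⟨X ∪ W, Y,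
        by rw [Set.union_right_comm, hXY, Set.compl_union_self],
        Set.disjoint_union_left.mpr ⟨hdisj, hYW.symm⟩,
        hXne.inl, hYne, hle'⟩
    have h1 := lt_of_not_ge hnot
    have hgt : ζ * (X.ncard : ℝ) * Y.ncard < (ebtw H (X ∪ W) Y : ℝ) := by
      refine lt_of_le_of_lt ?_ h1
      have h2 : (X.ncard : ℝ) ≤ ((X ∪ W).ncard : ℝ) := by
        exact_mod_cast Set.ncard_le_ncard Set.subset_union_left (Set.toFinite _)
      have hy0 : (0:ℝ) ≤ Y.ncard := by positivity
      exact mul_le_mul_of_nonneg_right (mul_le_mul_of_nonneg_left h2 hζ.le) hy0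
    have hub : (ebtw H (X ∪ W) Y : ℝ)
        ≤ 0.99 * ζ * X.ncard * Y.ncard + 2 * (τ * n ^ 2) := by
      have h1c : (ebtw H (X ∪ W) Y : ℝ)
          ≤ (ebtw H' (X ∪ W) Y : ℝ) + ((H.edgeSet \ H'.edgeSet).ncard : ℝ) := by
        exact_mod_cast ebtw_le_add hle (X ∪ W) Y
      have h2c : (ebtw H' (X ∪ W) Y : ℝ) ≤ (ebtw H' X Y : ℝ) + (ebtw H' W Y : ℝ) := by
        exact_mod_cast ebtw_union_le H' X W Y
      have h3c : (ebtw H' W Y : ℝ) ≤ (W.ncard : ℝ) * Y.ncard := by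
        exact_mod_cast ebtw_le_mul H' hYW.symm
      have hW0 : (0:ℝ) ≤ W.ncard := by positivity
      have h4 : (W.ncard : ℝ) * Y.ncard ≤ τ * n ^ 2 := by
        have h5 : (W.ncard : ℝ) * Y.ncard ≤ (τ * n) * n :=
          mul_le_mul hW hYn (by positivity) (by positivity)
        calc (W.ncard : ℝ) * Y.ncard ≤ (τ * n) * n := h5
          _ = τ * n ^ 2 := by ring
      linarith
    -- final contradiction
    have hxyn : 0.49 * (δ * n) ^ 2 ≤ (X.ncard : ℝ) * Y.ncard := by
      have := mul_le_mul hXlb hYlb (by positivity) (le_trans (by positivity) hXlb)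
      linarith only [this]
    have hz : 0.01 * ζ * ((X.ncard : ℝ) * Y.ncard) < 2 * (τ * n ^ 2) := by
      linarith only [hgt, hub]
    have hA : 0.01 * ζ * (0.49 * (δ * n) ^ 2) ≤ 0.01 * ζ * ((X.ncard : ℝ) * Y.ncard) :=
      mul_le_mul_of_nonneg_left hxyn (by positivity)
    have hB : 2 * (τ * (n:ℝ) ^ 2) ≤ 2 * (0.002 * ζ * δ ^ 2 * n ^ 2) := by
      have := mul_le_mul_of_nonneg_right hτζ (sq_nonneg (n:ℝ))
      linarith
    have hC : (0:ℝ) < ζ * δ ^ 2 * (n:ℝ) ^ 2 := by positivity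
    linarith only [hA, hz, hB, hC]
  · intro v hv
    have hsub : {u | H'.Adj v u} ⊆ {u | u ∈ Wᶜ ∧ H'.Adj v u} ∪ W := by
      intro u hu
      by_cases h : u ∈ W
      · exact Or.inr h
      · exact Or.inl ⟨h, hu⟩
    have hN : {u | H'.Adj v u}.ncard ≤ {u | u ∈ Wᶜ ∧ H'.Adj v u}.ncard + W.ncard :=
      le_trans (Set.ncard_le_ncard hsub (Set.toFinite _)) (Set.ncard_union_le _ _)
    have hNc : ({u | H'.Adj v u}.ncard : ℝ)
        ≤ ({u | u ∈ Wᶜ ∧ H'.Adj v u}.ncard : ℝ) + W.ncard := by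
      exact_mod_cast hN
    have := hdeg v
    linarith only [hNc, this, hW, hτn]
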